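/- Let θ = (θ_1,…,θ_k) be a probability vector with e^{-1}/k < θ_i < e/k for all i and θ not uniform. Then θ satisfies the skewentropy condition: V(θ)² + 2·H(θ)·V(θ) - H(θ)·S(θ) > 0, where H(θ) = Σ_i θ_i·log(1/θ_i), V(θ) = Σ_i θ_i·(log(1/θ_i) - H(θ))², S(θ) = Σ_i θ_i·(log(1/θ_i) - H(θ))³. -/

import Mathlib

theorem stmt_12 {k : ℕ} (θ : Fin k → ℝ)
    (hpos : ∀ i, 0 < θ i) (hsum : ∑ i, θ i = 1)
    (hnonunif : θ ≠ fun _ => 1 / (k : ℝ))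
    (hbound : ∀ i, Real.exp (-1) / k < θ i ∧ θ i < Real.exp 1 / k)
    (H V S : ℝ)
    (hH : H = ∑ i, θ i * Real.log (1 / θ i))
    (hV : V = ∑ i, θ i * (Real.log (1 / θ i) - H) ^ 2)
    (hS : S = ∑ i, θ i * (Real.log (1 / θ i) - H) ^ 3) :
    V ^ 2 + 2 * H * V - H * S > 0 := by
  -- k ≥ 2
  have hk2 : 2 ≤ k := by
    by_contra h
    push_neg at h
    interval_cases k
    · simp at hsum
    · apply hnonunif
      funext i
      have : i = 0 := Subsingleton.elim i 0
      subst this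
      simpa using hsum
  have hk0 : (0:ℝ) < (k:ℝ) := by positivity
  set a : Fin k → ℝ := fun i => Real.log (1 / θ i) with ha
  -- each θ i < 1
  have hlt1 : ∀ i, θ i < 1 := by
    intro i
    have : Nontrivial (Fin k) := Fin.nontrivial_iff_two_le.mpr hk2
    obtain ⟨j, hj⟩ := exists_ne i
    have h1 : θ i < ∑ m, θ m :=
      Finset.single_lt_sum hj (Finset.mem_univ i) (Finset.mem_univ j)
        (hpos j) (fun m _ _ => (hpos m).le)
    linarith [hsum ▸ h1]
  -- a bounds
  have haub : ∀ i, a i < Real.log k + 1 := by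
    intro i
    have h1 : Real.exp (-1) / k < θ i := (hbound i).1
    have h2 : Real.log (Real.exp (-1) / k) < Real.log (θ i) :=
      Real.log_lt_log (by positivity) h1
    rw [Real.log_div (Real.exp_ne_zero _) (ne_of_gt hk0), Real.log_exp] at h2
    have : a i = - Real.log (θ i) := by
      simp [ha, Real.log_div, (hpos i).ne']
    linarith
  have halb : ∀ i, Real.log k - 1 < a i := by
    intro i
    have h1 : θ i < Real.exp 1 / k := (hbound i).2
    have h2 : Real.log (θ i) < Real.log (Real.exp 1 / k) :=
      Real.log_lt_log (hpos i) h1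
    rw [Real.log_div (Real.exp_ne_zero _) (ne_of_gt hk0), Real.log_exp] at h2
    have : a i = - Real.log (θ i) := by
      simp [ha, Real.log_div, (hpos i).ne']
    linarith
  -- H > log k - 1
  have hne : (Finset.univ : Finset (Fin k)).Nonempty := by
    have : Nonempty (Fin k) := ⟨⟨0, by omega⟩⟩
    exact Finset.univ_nonempty
  have hHlb : Real.log k - 1 < H := by
    have : ∑ i, θ i * (Real.log k - 1) < ∑ i, θ i * a i := by
      apply Finset.sum_lt_sum_of_nonempty hne
      intro i _
      exact mul_lt_mul_of_pos_left (halb i) (hpos i)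
    rw [← Finset.sum_mul, hsum, one_mul] at this
    rw [hH]; exact this
  -- H > 0
  have hHpos : 0 < H := by
    rw [hH]
    apply Finset.sum_pos _ hne
    intro i _
    apply mul_pos (hpos i)
    rw [Real.log_pos_iff (one_div_pos.mpr (hpos i)).le]
    rw [lt_div_iff₀ (hpos i), one_mul]
    exact hlt1 i
  -- V > 0
  have hVpos : 0 < V := by
    have hex : ∃ i, a i ≠ H := by
      by_contra h
      push_neg at h
      apply hnonunif
      have hθ : ∀ i, θ i = Real.exp (-H) := by
        intro i
        have := h i
        have : Real.log (θ i) = -H := by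
          have hai : a i = - Real.log (θ i) := by
            simp [ha, Real.log_div, (hpos i).ne']
          rw [h i] at hai; linarith
        rw [← this, Real.exp_log (hpos i)]
      have hsum' : (k:ℝ) * Real.exp (-H) = 1 := by
        rw [← hsum]
        simp [hθ, Finset.sum_const, mul_comm]
      funext i
      rw [hθ i]
      field_simp
      linarith [hsum']
    obtain ⟨j, hj⟩ := hex
    rw [hV]
    apply Finset.sum_pos'
    · intro i _; exact mul_nonneg (hpos i).le (sq_nonneg _)
    · refine ⟨j, Finset.mem_univ j, ?_⟩
      have hne0 : a j - H ≠ 0 := sub_ne_zero.mpr hj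
      have h2 : 0 < (a j - H)^2 := pow_two_pos_of_ne_zero hne0
      exact mul_pos (hpos j) h2
  -- 2V - S ≥ 0
  have hdiff : ∀ i, a i - H < 2 := fun i => by
    have := haub i; have := hHlb; linarith
  have h2VS : 0 ≤ 2 * V - S := by
    have : 2 * V - S = ∑ i, θ i * ((a i - H)^2 * (2 - (a i - H))) := by
      rw [hV, hS, Finset.mul_sum, ← Finset.sum_sub_distrib]
      apply Finset.sum_congr rfl
      intro i _
      ring
    rw [this]
    apply Finset.sum_nonneg
    intro i _
    have h1 : 0 < 2 - (a i - H) := by linarith [hdiff i]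
    have h2 : 0 ≤ (a i - H)^2 := sq_nonneg _
    exact mul_nonneg (hpos i).le (mul_nonneg h2 h1.le)
  nlinarith [mul_nonneg hHpos.le h2VS, sq_nonneg V, hVpos]
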